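/- Suppose G is generated by finite subgroups G_1 and G_2 with G_{12} = G_1 ∩ G_2 of index 3 in both, and no non-trivial subgroup of G_{12} is normal in G. If N is a normal subgroup of G containing ⟨O^2(G_1), O^2(G_2)⟩, then G = G_{12}·N, and moreover N is generated by N∩G_1 and N∩G_2, with [N∩G_1 : N∩G_{12}] = [N∩G_2 : N∩G_{12}] = 3, and no non-trivial subgroup of N∩G_{12} is normal in both N∩G_1 and N∩G_2. -/

import Mathlib

/-- `O^2(H)`: the smallest normal subgroup of a finite group `H` with 2-group quotient,
realized as the subgroup generated by the elements of `H` of odd order. -/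
def oddCore {G : Type*} [Group G] (H : Subgroup G) : Subgroup G :=
  Subgroup.closure {g : G | g ∈ H ∧ Odd (orderOf g)}

lemma oddCore_le {G : Type*} [Group G] (H : Subgroup G) : oddCore H ≤ H :=
  Subgroup.closure_le H |>.2 fun _ hg => hg.1

lemma sup_oddCore_eq {G : Type*} [Group G] (H P : Subgroup G) [Finite H]
    (hPH : P ≤ H) (hidx : P.relIndex H = 3) (hp : IsPGroup 2 ↥P) :
    P ⊔ oddCore H = H := by
  have hOH : oddCore H ≤ H := oddCore_le H
  have hcard : 3 ∣ Nat.card ↥H := by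
    have := Subgroup.card_mul_index (P.subgroupOf H)
    rw [show (P.subgroupOf H).index = P.relIndex H from rfl, hidx] at this
    exact ⟨Nat.card (P.subgroupOf H), by omega⟩
  haveI : Fact (Nat.Prime 3) := ⟨by norm_num⟩
  obtain ⟨x, hx⟩ := exists_prime_orderOf_dvd_card' 3 hcard
  have hx' : orderOf (x : G) = 3 := by
    rw [← hx]; exact orderOf_injective H.subtype H.subtype_injective x
  have hxOC : (x : G) ∈ oddCore H :=
    Subgroup.subset_closure ⟨x.2, by rw [hx']; exact ⟨1, rfl⟩⟩
  set J := P ⊔ oddCore H with hJ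
  have hJH : J ≤ H := sup_le hPH hOH
  have hPJ : P ≤ J := le_sup_left
  have hmul : P.relIndex J * J.relIndex H = 3 := by
    rw [Subgroup.relIndex_mul_relIndex P J H hPJ hJH, hidx]
  have hdvd3 : J.relIndex H ∣ 3 := Dvd.intro_left _ hmul
  rcases (Nat.prime_three).eq_one_or_self_of_dvd _ hdvd3 with h | h
  · exact le_antisymm hJH (Subgroup.relIndex_eq_one.mp h)
  · exfalso
    rw [h] at hmul
    have hP1 : P.relIndex J = 1 := by omega
    have hJP : J ≤ P := Subgroup.relIndex_eq_one.mp hP1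
    have hxP : (x : G) ∈ P := hJP (le_sup_right (α := Subgroup G) hxOC)
    obtain ⟨k, hk⟩ := hp ⟨(x : G), hxP⟩
    have hord : orderOf (⟨(x : G), hxP⟩ : ↥P) = 3 := by
      rw [← hx']
      exact (orderOf_injective P.subtype P.subtype_injective ⟨(x : G), hxP⟩).symm
    have hdvd : 3 ∣ 2 ^ k := hord ▸ orderOf_dvd_of_pow_eq_one hk
    have : (3 : ℕ) ∣ 2 := Nat.Prime.dvd_of_dvd_pow Nat.prime_three hdvd
    omega

lemma normal_inf_subgroupOf {G : Type*} [Group G] {N : Subgroup G} (hN : N.Normal)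
    (L : Subgroup G) : ((N ⊓ L).subgroupOf L).Normal := by
  constructor
  rintro ⟨a, haL⟩ ha ⟨g, hgL⟩
  rw [Subgroup.mem_subgroupOf] at ha ⊢
  exact ⟨hN.conj_mem a ha.1 g, L.mul_mem (L.mul_mem hgL ha.2) (L.inv_mem hgL)⟩

lemma mem_mul_of_sup {G : Type*} [Group G] (P A L : Subgroup G) (hP : P ≤ L) (hA : A ≤ L)
    (hsup : P ⊔ A = L) (hnorm : (A.subgroupOf L).Normal) {g : G} (hg : g ∈ L) :
    ∃ x ∈ P, ∃ y ∈ A, g = x * y := by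
  haveI := hnorm
  have hsup' : P.subgroupOf L ⊔ A.subgroupOf L = ⊤ := by
    rw [← Subgroup.subgroupOf_sup hP hA, hsup, Subgroup.subgroupOf_self]
  have hmem : (⟨g, hg⟩ : ↥L) ∈ (↑(P.subgroupOf L ⊔ A.subgroupOf L) : Set ↥L) := by
    rw [hsup']; trivial
  rw [Subgroup.mul_normal] at hmem
  obtain ⟨x, hx, y, hy, hxy⟩ := hmem
  refine ⟨(x : G), hx, (y : G), hy, ?_⟩
  have := congrArg (Subtype.val) hxy
  simpa using this.symm

lemma relIndex_part {G : Type*} [Group G] (L P A : Subgroup G) [Finite L]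
    (hPL : P ≤ L) (hAL : A ≤ L) (hsup : P ⊔ A = L) (hnorm : (A.subgroupOf L).Normal)
    (hidx : P.relIndex L = 3) : (P ⊓ A).relIndex A = 3 := by
  haveI := hnorm
  set P' := P.subgroupOf L with hP'
  set A' := A.subgroupOf L with hA'
  have hsup' : P' ⊔ A' = ⊤ := by
    rw [hP', hA', ← Subgroup.subgroupOf_sup hPL hAL, hsup, Subgroup.subgroupOf_self]
  have hinf : (P ⊓ A).subgroupOf L = P' ⊓ A' := Subgroup.comap_inf _ _ _
  have htarget : (P ⊓ A).relIndex A = (P' ⊓ A').relIndex A' := by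
    rw [← Subgroup.relIndex_subgroupOf hAL, hinf]
  rw [htarget]
  have hPidx : P'.index = 3 := hidx
  have e1 : (P' ⊓ A').relIndex A' * A'.index = (P' ⊓ A').index := by
    have := Subgroup.relIndex_mul_relIndex (P' ⊓ A') A' ⊤ inf_le_right le_top
    rwa [Subgroup.relIndex_top_right, Subgroup.relIndex_top_right] at this
  have e2 : (P' ⊓ A').relIndex P' * P'.index = (P' ⊓ A').index := by
    have := Subgroup.relIndex_mul_relIndex (P' ⊓ A') P' ⊤ inf_le_left le_top
    rwa [Subgroup.relIndex_top_right, Subgroup.relIndex_top_right] at this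
  have e3 : A'.index = (P' ⊓ A').relIndex P' := by
    have := Subgroup.relIndex_sup_right (K := A') (H := P')
    rw [hsup', Subgroup.relIndex_top_right] at this
    rw [this, ← Subgroup.inf_relIndex_right A' P', inf_comm]
  have hbne : (P' ⊓ A').relIndex P' ≠ 0 := Subgroup.index_ne_zero_of_finite
  rw [e3] at e1
  rw [hPidx] at e2
  have key : (P' ⊓ A').relIndex A' * ((P' ⊓ A').relIndex P') =
      3 * ((P' ⊓ A').relIndex P') := by
    rw [e1, mul_comm, e2]
  exact Nat.eq_of_mul_eq_mul_right (Nat.pos_of_ne_zero hbne) key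

theorem stmt5 {G : Type*} [Group G] (G1 G2 : Subgroup G) [Finite G1] [Finite G2]
    (hgen : G1 ⊔ G2 = ⊤)
    (h1 : (G1 ⊓ G2).relIndex G1 = 3) (h2 : (G1 ⊓ G2).relIndex G2 = 3)
    (h2grp : IsPGroup 2 ↥(G1 ⊓ G2))
    (hnonorm : ∀ K : Subgroup G, K ≤ G1 ⊓ G2 → K.Normal → K = ⊥)
    (N : Subgroup G) (hN : N.Normal) (hON : oddCore G1 ⊔ oddCore G2 ≤ N) :
    (G1 ⊓ G2) ⊔ N = ⊤ ∧
    (N ⊓ G1) ⊔ (N ⊓ G2) = N ∧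
    (N ⊓ (G1 ⊓ G2)).relIndex (N ⊓ G1) = 3 ∧
    (N ⊓ (G1 ⊓ G2)).relIndex (N ⊓ G2) = 3 ∧
    (∀ K : Subgroup G, K ≤ N ⊓ (G1 ⊓ G2) →
      (∀ g ∈ N ⊓ G1, ∀ k ∈ K, g * k * g⁻¹ ∈ K) →
      (∀ g ∈ N ⊓ G2, ∀ k ∈ K, g * k * g⁻¹ ∈ K) → K = ⊥) := by
  set G12 := G1 ⊓ G2 with hG12
  have hP1 : G12 ≤ G1 := inf_le_left
  have hP2 : G12 ≤ G2 := inf_le_right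
  have hOC1 : oddCore G1 ≤ N ⊓ G1 :=
    le_inf (le_trans le_sup_left hON) (oddCore_le G1)
  have hOC2 : oddCore G2 ≤ N ⊓ G2 :=
    le_inf (le_trans le_sup_right hON) (oddCore_le G2)
  have hG1eq : G12 ⊔ (N ⊓ G1) = G1 := by
    refine le_antisymm (sup_le hP1 inf_le_right) ?_
    calc G1 = G12 ⊔ oddCore G1 := (sup_oddCore_eq G1 G12 hP1 h1 h2grp).symm
    _ ≤ G12 ⊔ (N ⊓ G1) := sup_le_sup_left hOC1 _
  have hG2eq : G12 ⊔ (N ⊓ G2) = G2 := by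
    refine le_antisymm (sup_le hP2 inf_le_right) ?_
    calc G2 = G12 ⊔ oddCore G2 := (sup_oddCore_eq G2 G12 hP2 h2 h2grp).symm
    _ ≤ G12 ⊔ (N ⊓ G2) := sup_le_sup_left hOC2 _
  have hnorm1 : ((N ⊓ G1).subgroupOf G1).Normal := normal_inf_subgroupOf hN G1
  have hnorm2 : ((N ⊓ G2).subgroupOf G2).Normal := normal_inf_subgroupOf hN G2
  -- Statement 1
  have stmt1 : G12 ⊔ N = ⊤ := by
    refine le_antisymm le_top ?_
    rw [← hgen]
    refine sup_le ?_ ?_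
    · rw [← hG1eq]; exact sup_le_sup_left inf_le_left _
    · rw [← hG2eq]; exact sup_le_sup_left inf_le_left _
  -- N0 normal
  set N0 := (N ⊓ G1) ⊔ (N ⊓ G2) with hN0def
  have hN0leN : N0 ≤ N := sup_le inf_le_left inf_le_left
  have conj_mem : ∀ h ∈ G12, ∀ n ∈ N0, h * n * h⁻¹ ∈ N0 := by
    intro h hh
    have hh1 : h ∈ G1 := hP1 hh
    have hh2 : h ∈ G2 := hP2 hh
    have hle : N0 ≤ Subgroup.comap ((MulAut.conj h).toMonoidHom) N0 := by
      refine sup_le ?_ ?_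
      · intro n hn
        simp only [Subgroup.mem_comap, MulEquiv.coe_toMonoidHom, MulAut.conj_apply]
        exact Subgroup.mem_sup_left
          ⟨hN.conj_mem n hn.1 h, G1.mul_mem (G1.mul_mem hh1 hn.2) (G1.inv_mem hh1)⟩
      · intro n hn
        simp only [Subgroup.mem_comap, MulEquiv.coe_toMonoidHom, MulAut.conj_apply]
        exact Subgroup.mem_sup_right
          ⟨hN.conj_mem n hn.1 h, G2.mul_mem (G2.mul_mem hh2 hn.2) (G2.inv_mem hh2)⟩
    intro n hn
    have := hle hn
    simpa only [Subgroup.mem_comap, MulEquiv.coe_toMonoidHom, MulAut.conj_apply] using this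
  have hG12norm : G12 ≤ Subgroup.normalizer (N0 : Set G) := by
    intro h hh
    rw [Subgroup.mem_normalizer_iff]
    intro n
    constructor
    · exact conj_mem h hh n
    · intro hn
      have := conj_mem h⁻¹ (G12.inv_mem hh) _ hn
      have heq : h⁻¹ * (h * n * h⁻¹) * h⁻¹⁻¹ = n := by group
      rwa [heq] at this
  have hN0norm : N0.Normal := by
    rw [← Subgroup.normalizer_eq_top_iff]
    refine le_antisymm le_top ?_
    rw [← hgen]
    refine sup_le ?_ ?_
    · rw [← hG1eq]
      exact sup_le hG12norm (le_trans le_sup_left Subgroup.le_normalizer)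
    · rw [← hG2eq]
      exact sup_le hG12norm (le_trans le_sup_right Subgroup.le_normalizer)
  haveI := hN0norm
  have htop0 : G12 ⊔ N0 = ⊤ := by
    refine le_antisymm le_top ?_
    rw [← hgen]
    refine sup_le ?_ ?_
    · rw [← hG1eq]; exact sup_le_sup_left le_sup_left _
    · rw [← hG2eq]; exact sup_le_sup_left le_sup_right _
  -- Statement 2
  have stmt2 : N0 = N := by
    refine le_antisymm hN0leN ?_
    intro n hn
    have hmem : n ∈ (↑(G12 ⊔ N0) : Set G) := by rw [htop0]; trivial
    rw [Subgroup.mul_normal] at hmem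
    obtain ⟨x, hx, y, hy, hxy⟩ := hmem
    have hyN : y ∈ N := hN0leN hy
    have hxN : x ∈ N := by
      have hxeq : x = n * y⁻¹ := by rw [← hxy]; group
      rw [hxeq]; exact N.mul_mem hn (N.inv_mem hyN)
    have hx1 : x ∈ N ⊓ G1 := ⟨hxN, hP1 hx⟩
    rw [← hxy]
    exact N0.mul_mem (Subgroup.mem_sup_left hx1) hy
  -- Statements 3, 4
  have heq3 : N ⊓ G12 = G12 ⊓ (N ⊓ G1) := by
    ext x
    simp only [hG12, Subgroup.mem_inf]
    tauto
  have heq4 : N ⊓ G12 = G12 ⊓ (N ⊓ G2) := by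
    ext x
    simp only [hG12, Subgroup.mem_inf]
    tauto
  have stmt3 : (N ⊓ G12).relIndex (N ⊓ G1) = 3 := by
    rw [heq3]
    exact relIndex_part G1 G12 (N ⊓ G1) hP1 inf_le_right hG1eq hnorm1 h1
  have stmt4 : (N ⊓ G12).relIndex (N ⊓ G2) = 3 := by
    rw [heq4]
    exact relIndex_part G2 G12 (N ⊓ G2) hP2 inf_le_right hG2eq hnorm2 h2
  refine ⟨stmt1, stmt2, stmt3, stmt4, ?_⟩
  -- Statement 5
  intro K hK hK1 hK2
  have hKnorm : N ≤ Subgroup.normalizer (K : Set G) := by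
    rw [← stmt2]
    refine sup_le ?_ ?_
    · intro g hg
      rw [Subgroup.mem_normalizer_iff]
      intro k
      constructor
      · exact hK1 g hg k
      · intro hk
        have := hK1 g⁻¹ ((N ⊓ G1).inv_mem hg) _ hk
        have heqk : g⁻¹ * (g * k * g⁻¹) * g⁻¹⁻¹ = k := by group
        rwa [heqk] at this
    · intro g hg
      rw [Subgroup.mem_normalizer_iff]
      intro k
      constructor
      · exact hK2 g hg k
      · intro hk
        have := hK2 g⁻¹ ((N ⊓ G2).inv_mem hg) _ hk
        have heqk : g⁻¹ * (g * k * g⁻¹) * g⁻¹⁻¹ = k := by group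
        rwa [heqk] at this
  have hLG12 : Subgroup.normalClosure (K : Set G) ≤ G12 := by
    rw [Subgroup.normalClosure]
    rw [Subgroup.closure_le]
    intro x hx
    rw [Group.mem_conjugatesOfSet_iff] at hx
    obtain ⟨a, ha, hconj⟩ := hx
    obtain ⟨c, hx'⟩ := isConj_iff.mp hconj
    have hcmem : c ∈ (↑(G12 ⊔ N) : Set G) := by rw [stmt1]; trivial
    rw [Subgroup.mul_normal] at hcmem
    obtain ⟨h, hh, n, hn, hhn⟩ := hcmem
    have hb : n * a * n⁻¹ ∈ K := ((Subgroup.mem_normalizer_iff.mp (hKnorm hn)) a).mp ha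
    have hbG12 : n * a * n⁻¹ ∈ G12 := (hK hb).2
    have hxe : x = h * (n * a * n⁻¹) * h⁻¹ := by
      rw [← hx', ← hhn]; group
    rw [hxe]
    exact G12.mul_mem (G12.mul_mem hh hbG12) (G12.inv_mem hh)
  have hLbot : Subgroup.normalClosure (K : Set G) = ⊥ :=
    hnonorm _ hLG12 Subgroup.normalClosure_normal
  have : K ≤ (⊥ : Subgroup G) := hLbot ▸ Subgroup.le_normalClosure
  exact le_bot_iff.mp this
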